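/- Let a : ℝ × ℝⁿ → ℝⁿ, a(y, ·) strongly monotone and Lipschitz with constants M ≥ m > 0 uniformly in y, continuous and 1-periodic in y. Define b(y,·) := a(y,·)⁻¹, b₀(v) := ∫₀¹ b(y, v) dy, and a₀ := b₀⁻¹. Fix v̄ ∈ ℝⁿ and define w(y) := ∫₀^y (b(z, v̄) − b₀(v̄)) dz − ∫₀¹ ∫₀^{z₁} (b(z₂, v̄) − b₀(v̄)) dz₂ dz₁. Then w is 1-periodic, ∫₀¹ w(y) dy = 0, a(y, b₀(v̄) + w'(y)) = v̄ is constant in y, and ∫₀¹ a(y, b₀(v̄) + w'(y)) dy = a₀(b₀(v̄)) = v̄. -/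

import Mathlib

open RealInnerProductSpace Set

theorem stmt8 {n : ℕ}
    (a b : ℝ → EuclideanSpace ℝ (Fin n) → EuclideanSpace ℝ (Fin n))
    (m M : ℝ) (hm : 0 < m) (hmM : m ≤ M)
    (hmono : ∀ (y : ℝ) (u₁ u₂ : EuclideanSpace ℝ (Fin n)),
      ⟪a y u₁ - a y u₂, u₁ - u₂⟫ ≥ m * ‖u₁ - u₂‖ ^ 2)
    (hLip : ∀ (y : ℝ) (u₁ u₂ : EuclideanSpace ℝ (Fin n)),
      ‖a y u₁ - a y u₂‖ ≤ M * ‖u₁ - u₂‖)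
    (hcont : Continuous fun p : ℝ × EuclideanSpace ℝ (Fin n) => a p.1 p.2)
    (hper : ∀ (y : ℝ) (v : EuclideanSpace ℝ (Fin n)), a (y + 1) v = a y v)
    (hab : ∀ (y : ℝ) (v : EuclideanSpace ℝ (Fin n)), a y (b y v) = v)
    (hba : ∀ (y : ℝ) (v : EuclideanSpace ℝ (Fin n)), b y (a y v) = v)
    (b₀ : EuclideanSpace ℝ (Fin n) → EuclideanSpace ℝ (Fin n))
    (hb₀ : ∀ v, b₀ v = ∫ y in (0:ℝ)..1, b y v)
    (a₀ : EuclideanSpace ℝ (Fin n) → EuclideanSpace ℝ (Fin n))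
    (ha₀ : ∀ v, a₀ (b₀ v) = v ∧ b₀ (a₀ v) = v)
    (vbar : EuclideanSpace ℝ (Fin n)) (w : ℝ → EuclideanSpace ℝ (Fin n))
    (hw : ∀ y : ℝ, w y = (∫ z in (0:ℝ)..y, (b z vbar - b₀ vbar))
      - ∫ z₁ in (0:ℝ)..1, ∫ z₂ in (0:ℝ)..z₁, (b z₂ vbar - b₀ vbar)) :
    (∀ y : ℝ, w (y + 1) = w y) ∧
    (∫ y in (0:ℝ)..1, w y) = 0 ∧
    (∀ y : ℝ, HasDerivAt w (b y vbar - b₀ vbar) y) ∧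
    (∀ y : ℝ, a y (b₀ vbar + (b y vbar - b₀ vbar)) = vbar) ∧
    (∫ y in (0:ℝ)..1, a y (b₀ vbar + (b y vbar - b₀ vbar))) = vbar ∧
    a₀ (b₀ vbar) = vbar := by

  -- periodicity of b in y
  have hbper : ∀ y : ℝ, b (y + 1) vbar = b y vbar := by
    intro y
    have h := hba (y + 1) (b y vbar)
    rw [hper, hab] at h
    exact h
  -- continuity of y ↦ b y vbar
  have hgcont : Continuous (fun y : ℝ => b y vbar) := by
    rw [continuous_iff_continuousAt]
    intro z
    have key : ∀ y : ℝ, ‖b y vbar - b z vbar‖ ≤ (1 / m) * ‖vbar - a y (b z vbar)‖ := by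
      intro y
      have h1 := hmono y (b y vbar) (b z vbar)
      rw [hab] at h1
      have h2 : ⟪vbar - a y (b z vbar), b y vbar - b z vbar⟫ ≤
          ‖vbar - a y (b z vbar)‖ * ‖b y vbar - b z vbar‖ := real_inner_le_norm _ _
      have hd := norm_nonneg (b y vbar - b z vbar)
      have hN := norm_nonneg (vbar - a y (b z vbar))
      rw [ge_iff_le] at h1
      rw [div_mul_eq_mul_div, le_div_iff₀ hm]
      nlinarith [sq_nonneg (‖b y vbar - b z vbar‖)]
    have htend : Filter.Tendsto (fun y : ℝ => (1 / m) * ‖vbar - a y (b z vbar)‖)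
        (nhds z) (nhds 0) := by
      have hc : Continuous (fun y : ℝ => (1 / m) * ‖vbar - a y (b z vbar)‖) := by
        have : Continuous (fun y : ℝ => a y (b z vbar)) :=
          hcont.comp (continuous_id.prodMk continuous_const)
        exact continuous_const.mul ((continuous_const.sub this).norm)
      have := hc.tendsto z
      simpa [hab z vbar] using this
    unfold ContinuousAt
    rw [tendsto_iff_norm_sub_tendsto_zero]
    exact squeeze_zero (fun y => norm_nonneg _) key htend
  have hfcont : Continuous (fun y : ℝ => b y vbar - b₀ vbar) :=
    hgcont.sub continuous_const
  have hint : ∀ x y : ℝ, IntervalIntegrable (fun z : ℝ => b z vbar - b₀ vbar)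
      MeasureTheory.volume x y := fun x y => hfcont.intervalIntegrable x y
  -- ∫₀¹ f = 0
  have hfint0 : (∫ z in (0:ℝ)..1, (b z vbar - b₀ vbar)) = 0 := by
    rw [intervalIntegral.integral_sub (hgcont.intervalIntegrable 0 1)
      intervalIntegrable_const, intervalIntegral.integral_const, ← hb₀]
    simp
  -- primitive F
  set F : ℝ → EuclideanSpace ℝ (Fin n) :=
    fun t => ∫ z in (0:ℝ)..t, (b z vbar - b₀ vbar) with hF_def
  have hFderiv : ∀ y : ℝ, HasDerivAt F (b y vbar - b₀ vbar) y := by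
    intro y
    exact intervalIntegral.integral_hasDerivAt_right (hint 0 y)
      (hfcont.stronglyMeasurableAtFilter _ _) hfcont.continuousAt
  have hFcont : Continuous F :=
    continuous_iff_continuousAt.mpr fun y => (hFderiv y).continuousAt
  have hfper : Function.Periodic (fun z : ℝ => b z vbar - b₀ vbar) 1 := by
    intro y; simp [hbper y]
  have hFper : ∀ y : ℝ, F (y + 1) = F y := by
    intro y
    have h1 : F (y + 1) = F y + ∫ z in y..(y + 1), (b z vbar - b₀ vbar) :=
      (intervalIntegral.integral_add_adjacent_intervals (hint 0 y) (hint y (y + 1))).symm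
    have h2 : (∫ z in y..(y + 1), (b z vbar - b₀ vbar)) =
        ∫ z in (0:ℝ)..(0 + 1), (b z vbar - b₀ vbar) :=
      hfper.intervalIntegral_add_eq y 0
    rw [h1, h2]
    simp only [zero_add, hfint0, add_zero]
  set C : EuclideanSpace ℝ (Fin n) :=
    ∫ z₁ in (0:ℝ)..1, ∫ z₂ in (0:ℝ)..z₁, (b z₂ vbar - b₀ vbar) with hC_def
  have hwF : w = fun y => F y - C := funext fun y => hw y
  have hcell : ∀ y : ℝ, a y (b₀ vbar + (b y vbar - b₀ vbar)) = vbar := by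
    intro y
    have h : b₀ vbar + (b y vbar - b₀ vbar) = b y vbar := by abel
    rw [h]; exact hab y vbar
  refine ⟨?_, ?_, ?_, hcell, ?_, (ha₀ vbar).1⟩
  · intro y
    rw [hw, hw]
    exact congrArg (fun x => x - C) (hFper y)
  · rw [hwF]
    rw [intervalIntegral.integral_sub (hFcont.intervalIntegrable 0 1)
      intervalIntegrable_const, intervalIntegral.integral_const]
    simp [hC_def]
    exact sub_self _
  · intro y
    rw [hwF]
    exact (hFderiv y).sub_const C
  · have : (∫ y in (0:ℝ)..1, a y (b₀ vbar + (b y vbar - b₀ vbar))) =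
        ∫ y in (0:ℝ)..1, vbar := by
      apply intervalIntegral.integral_congr
      intro y _
      exact hcell y
    rw [this, intervalIntegral.integral_const]
    simp
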